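/- Let G be a finite directed graph (loops and multiple edges allowed) with n vertices and adjacency matrix A, and let P_G(λ) = λ^n + c_1 λ^{n-1} + ⋯ + c_n be its characteristic polynomial. Then for each i = 1,…,n, c_i = Σ_{L ∈ 𝓛_i} (−1)^{p(L)}, where 𝓛_i is the set of all linear directed subgraphs L of G with exactly i vertices and p(L) denotes the number of connected components of L. -/

import Mathlib

open Polynomial Finset


/-- The number of cycles of a permutation, counting fixed points as 1-cycles. -/
def cyclesCount {α : Type*} [Fintype α] [DecidableEq α] (σ : Equiv.Perm α) : ℕ :=
  (Fintype.card α - σ.cycleType.sum) + σ.cycleType.card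

lemma sign_mul_pow {α : Type*} [Fintype α] [DecidableEq α] (σ : Equiv.Perm α) :
    ((Equiv.Perm.sign σ : ℤ)) * (-1) ^ (Fintype.card α) = (-1) ^ cyclesCount σ := by
  have hs : σ.cycleType.sum ≤ Fintype.card α := by
    rw [Equiv.Perm.sum_cycleType]
    exact Finset.card_le_univ _
  have h1 : ((Equiv.Perm.sign σ : ℤ)) =
      (-1) ^ (σ.cycleType.sum + Multiset.card σ.cycleType) := by
    rw [Equiv.Perm.sign_of_cycleType]
    push_cast
    ring
  rw [h1, cyclesCount, ← pow_add]
  have h2 : σ.cycleType.sum + Multiset.card σ.cycleType + Fintype.card α =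
      (Fintype.card α - σ.cycleType.sum + Multiset.card σ.cycleType) + 2 * σ.cycleType.sum := by
    omega
  rw [h2, pow_add, pow_mul]
  simp

lemma perm_mem_iff {V : Type*} [Fintype V] [DecidableEq V] {S : Finset V}
    {σ : Equiv.Perm V} (hσ : σ.support ⊆ S) (x : V) : x ∈ S ↔ σ x ∈ S := by
  by_cases hx : x ∈ σ.support
  · have hx2 : σ x ∈ σ.support := by rwa [Equiv.Perm.apply_mem_support]
    simp [hσ hx, hσ hx2]
  · rw [Equiv.Perm.notMem_support] at hx
    rw [hx]

lemma sum_perm_extend {V : Type*} [Fintype V] [DecidableEq V] (S : Finset V)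
    (F : Equiv.Perm V → ℤ) :
    ∑ σ ∈ Finset.univ.filter (fun σ : Equiv.Perm V => σ.support ⊆ S), F σ =
      ∑ τ : Equiv.Perm {x : V // x ∈ S}, F (τ.extendDomain (Equiv.refl _)) := by
  refine Finset.sum_bij'
    (fun σ hσ => σ.subtypePerm (p := fun x => x ∈ S)
      (fun x => (perm_mem_iff (Finset.mem_filter.mp hσ).2 x).symm))
    (fun τ _ => τ.extendDomain (Equiv.refl _)) ?_ ?_ ?_ ?_ ?_
  · intro σ hσ; exact Finset.mem_univ _
  · intro τ _
    rw [Finset.mem_filter]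
    refine ⟨Finset.mem_univ _, fun x hx => ?_⟩
    by_contra hxS
    rw [Equiv.Perm.mem_support] at hx
    exact hx (τ.extendDomain_apply_not_subtype (Equiv.refl _) hxS)
  · intro σ hσ
    ext x
    by_cases hx : x ∈ S
    · rw [Equiv.Perm.extendDomain_apply_subtype _ _ hx]
      rfl
    · rw [Equiv.Perm.extendDomain_apply_not_subtype _ _ hx]
      have := (Finset.mem_filter.mp hσ).2
      by_contra hne
      exact hx (this (Equiv.Perm.mem_support.mpr (Ne.symm hne)))
  · intro τ _
    ext x
    simp [Equiv.Perm.subtypePerm_apply, Equiv.Perm.extendDomain_apply_subtype _ _ x.2]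
  · intro σ hσ
    congr 1
    ext x
    by_cases hx : x ∈ S
    · rw [Equiv.Perm.extendDomain_apply_subtype _ _ hx]
      rfl
    · rw [Equiv.Perm.extendDomain_apply_not_subtype _ _ hx]
      have := (Finset.mem_filter.mp hσ).2
      by_contra hne
      exact hx (this (Equiv.Perm.mem_support.mpr hne))

lemma coeff_prod_charmatrix {V : Type*} [Fintype V] [DecidableEq V]
    (B : Matrix V V ℤ) (σ : Equiv.Perm V) (k : ℕ) :
    (∏ v, (Matrix.charmatrix B) (σ v) v).coeff k =
      ∑ T ∈ (Finset.univ : Finset V).powerset,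
        if (∀ v ∈ T, σ v = v) ∧ T.card = k then
          (-1 : ℤ) ^ ((Finset.univ \ T).card) * ∏ v ∈ Finset.univ \ T, B (σ v) v
        else 0 := by
  have h : ∀ v : V, (Matrix.charmatrix B) (σ v) v =
      (if σ v = v then (Polynomial.X : ℤ[X]) else 0) + (- Polynomial.C (B (σ v) v)) := by
    intro v
    by_cases h : σ v = v
    · rw [if_pos h, h, Matrix.charmatrix_apply_eq, sub_eq_add_neg]
    · rw [Matrix.charmatrix_apply_ne _ _ _ h, if_neg h, zero_add]
  rw [Finset.prod_congr rfl (fun v _ => h v), Finset.prod_add, Polynomial.finset_sum_coeff]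
  refine Finset.sum_congr rfl fun T _ => ?_
  by_cases hT : ∀ v ∈ T, σ v = v
  · have h1 : (∏ v ∈ T, if σ v = v then (Polynomial.X : ℤ[X]) else 0) = X ^ T.card := by
      rw [Finset.prod_congr rfl (fun v hv => if_pos (hT v hv)), Finset.prod_const]
    have h2 : (∏ v ∈ Finset.univ \ T, (- Polynomial.C (B (σ v) v))) =
        Polynomial.C ((-1 : ℤ) ^ ((Finset.univ \ T).card) * ∏ v ∈ Finset.univ \ T, B (σ v) v) := by
      rw [map_mul, map_prod, map_pow, map_neg, map_one]
      rw [← Finset.prod_const, ← Finset.prod_mul_distrib]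
      exact Finset.prod_congr rfl fun v _ => (neg_one_mul _).symm
    rw [h1, h2, mul_comm, Polynomial.C_mul_X_pow_eq_monomial, Polynomial.coeff_monomial]
    by_cases hk : T.card = k
    · rw [if_pos hk, if_pos ⟨hT, hk⟩]
    · rw [if_neg hk, if_neg (by tauto)]
  · push_neg at hT
    obtain ⟨v, hv, hne⟩ := hT
    rw [Finset.prod_eq_zero hv (show (if σ v = v then (Polynomial.X : ℤ[X]) else 0) = 0 from if_neg hne), zero_mul, Polynomial.coeff_zero,
      if_neg (by tauto)]


/-- Coefficient theorem for digraphs: in the characteristic polynomial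
`P_G(λ) = λ^n + c_1 λ^{n-1} + ⋯ + c_n` of the adjacency matrix `A` of a digraph `G`
(with multiplicities `A i j`), the coefficient `c_i` equals
`Σ_{L ∈ 𝓛_i} (−1)^{p(L)}`, the sum over all linear directed subgraphs `L` of `G`
with exactly `i` vertices (a linear subgraph is given by a vertex set `S`, a
permutation `σ` of `S`, and a choice of one of the `A v (σ v)` parallel edges
at each `v ∈ S`, accounted for by the product of multiplicities), with
`p(L)` the number of components of `L`. -/
theorem stmt0 {V : Type*} [Fintype V] [DecidableEq V] (A : V → V → ℕ)
    (i : ℕ) (hi : 1 ≤ i) (hin : i ≤ Fintype.card V) :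
    (Matrix.charpoly (Matrix.of fun a b => (A a b : ℤ))).coeff (Fintype.card V - i) =
      ∑ S ∈ Finset.univ.filter (fun S : Finset V => S.card = i),
        ∑ σ : Equiv.Perm {x : V // x ∈ S},
          (-1 : ℤ) ^ cyclesCount σ * ∏ x : {x : V // x ∈ S}, (A x.1 (σ x).1 : ℤ) := by
  classical
  set n := Fintype.card V with hn
  set k := n - i with hk
  set B : Matrix V V ℤ := Matrix.of fun a b => (A a b : ℤ) with hB
  rw [Matrix.charpoly, Matrix.det_apply', Polynomial.finset_sum_coeff]
  have step1 : ∀ σ : Equiv.Perm V,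
      ((((Equiv.Perm.sign σ : ℤ) : ℤ[X])) * ∏ v, (Matrix.charmatrix B) (σ v) v).coeff k =
      ∑ S ∈ (Finset.univ : Finset V).powerset,
        if σ.support ⊆ S ∧ S.card = i then
          (Equiv.Perm.sign σ : ℤ) * ((-1 : ℤ) ^ S.card * ∏ v ∈ S, B (σ v) v)
        else 0 := by
    intro σ
    rw [Polynomial.coeff_intCast_mul, coeff_prod_charmatrix, Finset.mul_sum]
    refine Finset.sum_nbij' (fun T => Finset.univ \ T) (fun S => Finset.univ \ S)
      (fun T _ => Finset.mem_powerset.mpr (Finset.sdiff_subset))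
      (fun S _ => Finset.mem_powerset.mpr (Finset.sdiff_subset))
      (fun T hT => Finset.sdiff_sdiff_eq_self (Finset.mem_powerset.mp hT))
      (fun S hS => Finset.sdiff_sdiff_eq_self (Finset.mem_powerset.mp hS))
      (fun T _ => ?_)
    rw [mul_ite, mul_zero]
    beta_reduce
    refine if_congr ?_ rfl rfl
    have hcard : (Finset.univ \ T).card = n - T.card := by
      rw [Finset.card_sdiff_of_subset (Finset.subset_univ _), Finset.card_univ]
    constructor
    · rintro ⟨h1, h2⟩
      refine ⟨fun v hv => Finset.mem_sdiff.mpr ⟨Finset.mem_univ _, fun hvT => ?_⟩, ?_⟩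
      · exact (Equiv.Perm.mem_support.mp hv) (h1 v hvT)
      · have : T.card ≤ n := by rw [hn, ← Finset.card_univ]; exact Finset.card_le_univ _
        omega
    · rintro ⟨h1, h2⟩
      have hTn : T.card ≤ n := by rw [hn, ← Finset.card_univ]; exact Finset.card_le_univ _
      refine ⟨fun v hv => ?_, by omega⟩
      by_contra hne
      have := h1 (Equiv.Perm.mem_support.mpr hne)
      exact (Finset.mem_sdiff.mp this).2 hv
  rw [Finset.sum_congr rfl (fun σ _ => step1 σ), Finset.sum_comm]
  have step2 : ∀ S : Finset V,
      (∑ σ : Equiv.Perm V, if σ.support ⊆ S ∧ S.card = i then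
          (Equiv.Perm.sign σ : ℤ) * ((-1 : ℤ) ^ S.card * ∏ v ∈ S, B (σ v) v) else 0) =
      if S.card = i then
        (∑ σ ∈ Finset.univ.filter (fun σ : Equiv.Perm V => σ.support ⊆ S),
          (Equiv.Perm.sign σ : ℤ) * ((-1 : ℤ) ^ S.card * ∏ v ∈ S, B (σ v) v))
      else 0 := by
    intro S
    by_cases hS : S.card = i
    · rw [if_pos hS, Finset.sum_filter]
      exact Finset.sum_congr rfl fun σ _ => by simp [hS]
    · rw [if_neg hS]
      exact Finset.sum_eq_zero fun σ _ => by simp [hS]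
  rw [Finset.sum_congr rfl (fun S _ => step2 S), Finset.powerset_univ, ← Finset.sum_filter]
  refine Finset.sum_congr rfl fun S hS => ?_
  have hScard : S.card = i := (Finset.mem_filter.mp hS).2
  rw [sum_perm_extend]
  refine Fintype.sum_equiv (Equiv.inv (Equiv.Perm {x : V // x ∈ S})) _ _ fun τ => ?_
  simp only [Equiv.inv_apply]
  -- goal: F (extendDomain τ) = g (τ⁻¹)
  have hsign : ((Equiv.Perm.sign (τ.extendDomain (Equiv.refl {x : V // x ∈ S})) : ℤ)) =
      (Equiv.Perm.sign τ : ℤ) := by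
    rw [Equiv.Perm.sign_extendDomain]
  have hprod : (∏ v ∈ S, B ((τ.extendDomain (Equiv.refl {x : V // x ∈ S})) v) v) =
      ∏ x : {x : V // x ∈ S}, B (τ x).1 x.1 := by
    rw [Finset.univ_eq_attach, ← Finset.prod_attach S (fun v => B ((τ.extendDomain (Equiv.refl {x : V // x ∈ S})) v) v)]
    refine Finset.prod_congr rfl fun x _ => ?_
    rw [Equiv.Perm.extendDomain_apply_subtype _ _ x.2]
    rfl
  rw [hsign, hprod]
  have hcyc : cyclesCount (τ⁻¹) = cyclesCount τ := by
    unfold cyclesCount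
    rw [Equiv.Perm.cycleType_inv]
  rw [hcyc]
  have hcard : Fintype.card {x : V // x ∈ S} = i := by
    rw [Fintype.card_coe, hScard]
  have hsgn2 : (Equiv.Perm.sign τ : ℤ) * (-1 : ℤ) ^ S.card = (-1 : ℤ) ^ cyclesCount τ := by
    rw [hScard, ← hcard, sign_mul_pow]
  have hprod2 : (∏ x : {x : V // x ∈ S}, B (τ x).1 x.1) =
      ∏ x : {x : V // x ∈ S}, B x.1 ((τ⁻¹ x)).1 := by
    rw [← Equiv.prod_comp τ (fun x => B x.1 ((τ⁻¹ x)).1)]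
    refine Finset.prod_congr rfl fun x _ => by simp
  rw [← mul_assoc, hsgn2, hprod2]
  rfl
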